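/- Fix a real number b > 1 and an integer t ≥ 0, and let (C_n) be a bounded sequence of reals such that α_C(n) := 2 log_b n + (t−2) log_b log_b n − C_n is a positive integer, and set r := ⌊n/α_C(n)⌋. For an r-tuple (k_1,…,k_r) of positive integers with Σ_i k_i = n, define h(k_1,…,k_r) := −Σ_{i=1}^r ( k_i^2/2 − (t/2)·k_i·log_b k_i ). Then for all sufficiently large n, h is maximized over all such r-tuples (with every k_i ≤ α_C(n) + 1) by the balanced tuples, i.e. those in which any two parts differ in size by at most one. -/

import Mathlib

open Filter

/-- `h(k_1,…,k_r) = −Σ_i (k_i²/2 − (t/2)·k_i·log_b k_i)`. -/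
noncomputable def hfun (b : ℝ) (t : ℕ) {r : ℕ} (k : Fin r → ℕ) : ℝ :=
  -∑ i, ((k i : ℝ) ^ 2 / 2 - (t : ℝ) / 2 * (k i : ℝ) * Real.logb b (k i))

/-! Auxiliary definitions: the summand `ff` and its forward difference `gg`. -/

noncomputable def ff (b : ℝ) (t : ℕ) (k : ℕ) : ℝ :=
  (t : ℝ) / 2 * k * Real.logb b k - (k : ℝ) ^ 2 / 2

noncomputable def gg (b : ℝ) (t : ℕ) (a : ℕ) : ℝ := ff b t (a + 1) - ff b t a

lemma hfun_eq (b : ℝ) (t : ℕ) {r : ℕ} (k : Fin r → ℕ) :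
    hfun b t k = ∑ i, ff b t (k i) := by
  unfold hfun
  rw [← Finset.sum_neg_distrib]
  exact Finset.sum_congr rfl (fun i _ => by unfold ff; ring)

lemma evlinR (C D : ℝ) : ∀ᶠ x : ℝ in atTop, C * Real.log x + D ≤ x := by
  rcases le_or_gt C 0 with hC | hC
  · filter_upwards [eventually_ge_atTop (1 : ℝ), eventually_ge_atTop D] with x hx hxD
    have h1 : 0 ≤ Real.log x := Real.log_nonneg hx
    have h2 : C * Real.log x ≤ 0 := mul_nonpos_of_nonpos_of_nonneg hC h1
    linarith
  · have hlo := Real.isLittleO_log_id_atTop.def (show (0:ℝ) < (2*C)⁻¹ by positivity)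
    filter_upwards [hlo, eventually_ge_atTop (1 : ℝ), eventually_ge_atTop (2*D)]
      with x h1 h2 h3
    simp only [id_eq, Real.norm_eq_abs] at h1
    rw [abs_of_nonneg (Real.log_nonneg h2), abs_of_nonneg (by linarith : (0:ℝ) ≤ x)] at h1
    have h4 : C * Real.log x ≤ C * ((2*C)⁻¹ * x) := mul_le_mul_of_nonneg_left h1 hC.le
    have h5 : C * ((2*C)⁻¹ * x) = x / 2 := by field_simp
    linarith

lemma gg_expr (b : ℝ) (hb : 1 < b) (t : ℕ) (a : ℕ) :
    gg b t a = (t : ℝ) / (2 * Real.log b) *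
        (((a : ℝ) + 1) * Real.log ((a : ℝ) + 1) - (a : ℝ) * Real.log (a : ℝ))
      - ((a : ℝ) + 1/2) := by
  have hlb : Real.log b ≠ 0 := ne_of_gt (Real.log_pos hb)
  unfold gg ff
  rw [Real.logb, Real.logb]
  push_cast
  field_simp
  ring

set_option maxHeartbeats 1000000 in
/-- For all large `a`, the forward difference `gg` at `a` is below its value at any
`1 ≤ j < a`. -/
lemma glog (b : ℝ) (hb : 1 < b) (t : ℕ) :
    ∀ᶠ a : ℕ in atTop, ∀ j : ℕ, 1 ≤ j → j < a → gg b t a ≤ gg b t j := by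
  set c : ℝ := (t : ℝ) / (2 * Real.log b) with hc
  have hc0 : 0 ≤ c := by
    have := Real.log_pos hb; positivity
  have evE : ∀ᶠ a : ℕ in atTop,
      c * (1 + Real.log ((a : ℝ) + 1)) + 2 * c ≤ (a : ℝ) := by
    have h := evlinR c (3 * c + 1)
    have h2 := (tendsto_atTop_add_const_right atTop (1 : ℝ) tendsto_id).eventually h
    have h3 := tendsto_natCast_atTop_atTop.eventually h2
    filter_upwards [h3] with a ha
    simp only [id_eq] at ha
    have e : c * (1 + Real.log ((a : ℝ) + 1)) = c * Real.log ((a : ℝ) + 1) + c := by ring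
    linarith
  clear_value c
  filter_upwards [evE, eventually_ge_atTop 1] with a hE ha1
  intro j hj hja
  rw [gg_expr b hb t, gg_expr b hb t, ← hc]
  set A : ℝ := (a : ℝ) with hA
  set J : ℝ := (j : ℝ) with hJ
  clear_value A J
  have hA1 : 1 ≤ A := by rw [hA]; exact_mod_cast ha1
  have hJ1 : 1 ≤ J := by rw [hJ]; exact_mod_cast hj
  have hJA : J + 1 ≤ A := by
    rw [hA, hJ]
    have : (j : ℝ) + 1 ≤ (a : ℝ) := by exact_mod_cast hja
    linarith
  have hA0 : 0 < A := by linarith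
  have hJ0 : 0 < J := by linarith
  have hJ1p : 0 < J + 1 := by linarith
  have h1 : Real.log (A + 1) - Real.log A ≤ 1 / A := by
    have h := Real.log_le_sub_one_of_pos (show (0:ℝ) < (A+1)/A by positivity)
    rw [Real.log_div (by positivity) (by positivity)] at h
    have e2 : (A + 1) / A - 1 = 1 / A := by field_simp; ring
    linarith
  have h2 : 1 / (J + 1) ≤ Real.log (J + 1) - Real.log J := by
    have h := Real.log_le_sub_one_of_pos (show (0:ℝ) < J/(J+1) by positivity)
    rw [Real.log_div (by positivity) (by positivity)] at h
    have e2 : J / (J + 1) - 1 = -(1 / (J + 1)) := by field_simp; ring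
    linarith
  have h3 : Real.log (A + 1) - Real.log (J + 1) ≤ (A - J) / (J + 1) := by
    have h := Real.log_le_sub_one_of_pos (show (0:ℝ) < (A+1)/(J+1) by positivity)
    rw [Real.log_div (by positivity) (by positivity)] at h
    have e2 : (A + 1) / (J + 1) - 1 = (A - J) / (J + 1) := by field_simp; ring
    linarith
  have h4 : 0 ≤ Real.log (J + 1) := Real.log_nonneg (by linarith)
  set DA : ℝ := (A + 1) * Real.log (A + 1) - A * Real.log A with hDA
  set DJ : ℝ := (J + 1) * Real.log (J + 1) - J * Real.log J with hDJ
  clear_value DA DJ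
  have h5 : DA ≤ 1 + Real.log (A + 1) := by
    have := mul_le_mul_of_nonneg_left h1 hA0.le
    have e : A * (1 / A) = 1 := by field_simp
    rw [hDA]; nlinarith
  have h6 : J / (J + 1) + Real.log (J + 1) ≤ DJ := by
    have := mul_le_mul_of_nonneg_left h2 hJ0.le
    have e : J * (1 / (J + 1)) = J / (J + 1) := by ring
    rw [hDJ]; nlinarith
  have hkey : c * (DA - DJ) ≤ A - J := by
    by_cases hcc : 2 * c ≤ J + 1
    · have e0 : 1 - J / (J + 1) = 1 / (J + 1) := by field_simp; ring
      have hD : DA - DJ ≤ (1 + (A - J)) / (J + 1) := by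
        have h7 : DA - DJ ≤ 1 / (J + 1) + (A - J) / (J + 1) := by linarith
        have e : 1 / (J + 1) + (A - J) / (J + 1) = (1 + (A - J)) / (J + 1) := by ring
        linarith
      have hD2 : (1 + (A - J)) / (J + 1) ≤ 2 * (A - J) / (J + 1) := by
        gcongr <;> linarith
      have hAJ : 0 ≤ (A - J) / (J + 1) := div_nonneg (by linarith) hJ1p.le
      have h8 : 2 * c * ((A - J) / (J + 1)) ≤ (J + 1) * ((A - J) / (J + 1)) :=
        mul_le_mul_of_nonneg_right hcc hAJ
      have e3 : (J + 1) * ((A - J) / (J + 1)) = A - J := by field_simp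
      have e4 : c * (2 * (A - J) / (J + 1)) = 2 * c * ((A - J) / (J + 1)) := by ring
      have h9 : c * (DA - DJ) ≤ c * (2 * (A - J) / (J + 1)) :=
        mul_le_mul_of_nonneg_left (hD.trans hD2) hc0
      linarith
    · push_neg at hcc
      have hDJ0 : Real.log (J + 1) ≤ DJ := by
        have : 0 ≤ J / (J + 1) := div_nonneg hJ0.le hJ1p.le
        linarith
      have hD : DA - DJ ≤ 1 + Real.log (A + 1) := by linarith
      have step : c * (DA - DJ) ≤ c * (1 + Real.log (A + 1)) :=
        mul_le_mul_of_nonneg_left hD hc0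
      linarith
  have expand : c * (DA - DJ) = c * DA - c * DJ := by ring
  linarith

lemma linb (b : ℝ) (t a : ℕ) (hg : ∀ j : ℕ, 1 ≤ j → j < a → gg b t a ≤ gg b t j) :
    ∀ m k : ℕ, 1 ≤ k → k + m = a →
      ff b t k ≤ ff b t a + gg b t a * ((k : ℝ) - (a : ℝ)) := by
  intro m
  induction m with
  | zero =>
    intro k hk he
    have : k = a := by omega
    subst this
    simp
  | succ m ih =>
    intro k hk he
    have h2 := ih (k + 1) (by omega) (by omega)
    have hgk := hg k hk (by omega)
    have hfk : ff b t k = ff b t (k + 1) - gg b t k := by unfold gg; ring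
    have hcast : ((k + 1 : ℕ) : ℝ) = (k : ℝ) + 1 := by push_cast; ring
    rw [hcast] at h2
    have hexp : gg b t a * ((k : ℝ) + 1 - (a : ℝ))
        = gg b t a * ((k : ℝ) - (a : ℝ)) + gg b t a := by ring
    rw [hfk]
    linarith

lemma linb' (b : ℝ) (t a : ℕ) (hg : ∀ j : ℕ, 1 ≤ j → j < a → gg b t a ≤ gg b t j) :
    ∀ k : ℕ, 1 ≤ k → k ≤ a + 1 →
      ff b t k ≤ ff b t a + gg b t a * ((k : ℝ) - (a : ℝ)) := by
  intro k hk hka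
  rcases eq_or_lt_of_le hka with h | h
  · subst h
    have : ((a + 1 : ℕ) : ℝ) - (a : ℝ) = 1 := by push_cast; ring
    rw [this, mul_one]
    unfold gg; ring_nf
    exact le_refl _
  · exact linb b t a hg (a - k) k hk (by omega)

theorem stmt17 (b : ℝ) (hb : 1 < b) (t : ℕ) (C : ℕ → ℝ)
    (hC : ∃ M : ℝ, ∀ n : ℕ, |C n| ≤ M)
    (a : ℕ → ℕ)
    (ha : ∀ n : ℕ, 0 < a n ∧
      (a n : ℝ) = 2 * Real.logb b n
        + ((t : ℝ) - 2) * Real.logb b (Real.logb b n) - C n) :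
    ∀ᶠ n : ℕ in atTop,
      ∀ kb : Fin (n / a n) → ℕ,
        (∀ i, 1 ≤ kb i) → (∑ i, kb i = n) → (∀ i, kb i ≤ a n + 1) →
        (∀ i j, kb i ≤ kb j + 1) →
        ∀ k : Fin (n / a n) → ℕ,
          (∀ i, 1 ≤ k i) → (∑ i, k i = n) → (∀ i, k i ≤ a n + 1) →
          hfun b t k ≤ hfun b t kb := by
  obtain ⟨M, hM⟩ := hC
  have hlb : 0 < Real.log b := Real.log_pos hb
  have hL : Tendsto (fun n : ℕ => Real.logb b n) atTop atTop :=
    (Real.tendsto_logb_atTop hb).comp tendsto_natCast_atTop_atTop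
  have hev1 : ∀ᶠ n : ℕ in atTop, 1 ≤ Real.logb b n := hL.eventually (eventually_ge_atTop 1)
  have hev2 : ∀ᶠ n : ℕ in atTop,
      ((t : ℝ) + 2) * Real.logb b (Real.logb b n) ≤ Real.logb b n := by
    have h := evlinR (((t : ℝ) + 2) / Real.log b) 0
    have h' : ∀ᶠ y : ℝ in atTop, ((t : ℝ) + 2) * Real.logb b y ≤ y := by
      filter_upwards [h] with y hy
      have e : ((t : ℝ) + 2) * Real.logb b y
          = ((t : ℝ) + 2) / Real.log b * Real.log y := by
        rw [Real.logb]; ring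
      linarith
    exact hL.eventually h'
  have haR : Tendsto (fun n : ℕ => ((a n : ℕ) : ℝ)) atTop atTop := by
    apply tendsto_atTop_mono' atTop
      (show ∀ᶠ n : ℕ in atTop, Real.logb b n + (-M) ≤ ((a n : ℕ) : ℝ) from ?_)
      (tendsto_atTop_add_const_right atTop (-M) hL)
    filter_upwards [hev1, hev2] with n h1 h2
    have h3 := (ha n).2
    have hX : 0 ≤ Real.logb b (Real.logb b n) := Real.logb_nonneg hb h1
    have h4 : ((t : ℝ) - 2) * Real.logb b (Real.logb b n)
        + ((t : ℝ) + 2) * Real.logb b (Real.logb b n)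
        = 2 * (t : ℝ) * Real.logb b (Real.logb b n) := by ring
    have h5 : 0 ≤ 2 * (t : ℝ) * Real.logb b (Real.logb b n) := by positivity
    have h6 : C n ≤ M := (abs_le.mp (hM n)).2
    linarith
  have haT : Tendsto a atTop atTop := tendsto_natCast_atTop_iff.mp haR
  filter_upwards [haT.eventually (glog b hb t)] with n hg
  intro kb hkb1 hkbsum hkble hkbbal k hk1 hksum hkle
  -- every balanced part equals `a n` or `a n + 1`
  have hbub : ∀ i, a n ≤ kb i := by
    intro i
    by_contra h
    push_neg at h
    have hall : ∀ j ∈ Finset.univ, kb j ≤ a n := fun j _ => by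
      have := hkbbal j i; omega
    have hlt : ∑ j, kb j < ∑ _j : Fin (n / a n), a n :=
      Finset.sum_lt_sum hall ⟨i, Finset.mem_univ i, by omega⟩
    rw [hkbsum, Finset.sum_const, Finset.card_univ, Fintype.card_fin, smul_eq_mul] at hlt
    have := Nat.div_mul_le_self n (a n)
    omega
  have hkbval : ∀ i, kb i = a n ∨ kb i = a n + 1 := fun i => by
    have h1 := hkble i; have h2 := hbub i; omega
  have hlin := linb' b t (a n) hg
  rw [hfun_eq, hfun_eq]
  have heq : ∀ i, ff b t (kb i)
      = ff b t (a n) + gg b t (a n) * ((kb i : ℝ) - (a n : ℝ)) := by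
    intro i
    rcases hkbval i with h | h <;> rw [h]
    · simp
    · have : ((a n + 1 : ℕ) : ℝ) - (a n : ℝ) = 1 := by push_cast; ring
      rw [this, mul_one]
      unfold gg; ring
  have e1 : ∑ i, ((k i : ℝ)) = (n : ℝ) := by
    rw [← Nat.cast_sum, hksum]
  have e2 : ∑ i, ((kb i : ℝ)) = (n : ℝ) := by
    rw [← Nat.cast_sum, hkbsum]
  calc ∑ i, ff b t (k i)
      ≤ ∑ i, (ff b t (a n) + gg b t (a n) * ((k i : ℝ) - (a n : ℝ))) :=
        Finset.sum_le_sum (fun i _ => hlin _ (hk1 i) (hkle i))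
    _ = ∑ i, (ff b t (a n) + gg b t (a n) * ((kb i : ℝ) - (a n : ℝ))) := by
        rw [Finset.sum_add_distrib, Finset.sum_add_distrib,
          ← Finset.mul_sum, ← Finset.mul_sum,
          Finset.sum_sub_distrib, Finset.sum_sub_distrib, e1, e2]
    _ = ∑ i, ff b t (kb i) := Finset.sum_congr rfl (fun i _ => (heq i).symm)
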